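/- Define $F(\beta) = 2\sqrt{\beta(1-\beta)} - 4\beta + 2\beta\log\left(\frac{4\beta}{1-\beta}\right)$ for $\beta \in (0,1)$. Then $F(1/5) = 0$ and $F$ is strictly increasing on $(1/5, 1)$; in particular $F(\beta) > 0$ for all $\beta \in (1/5, 1)$. -/

import Mathlib

set_option linter.unnecessarySeqFocus false

lemma Fpoly_key (β s : ℝ) (h0 : 1/5 < β) (h1 : β < 1) (hs2 : s*s = β*(1-β)) (hs : 0 < s) :
    1 - 2*β - 3*β^2 ≤ 2*s*(1-2*β) := by
  rcases le_or_gt β (1/3) with hc | hc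
  · have ha : 0 ≤ 2*s*(1-2*β) := by nlinarith
    have hcube : 5*β^3-3*β^2+3*β-1 ≤ 0 := by nlinarith [sq_nonneg (β - 1/3), sq_nonneg β]
    have hsq : (1-2*β-3*β^2)^2 ≤ (2*s*(1-2*β))^2 := by
      nlinarith [mul_nonneg (by linarith : (0:ℝ) ≤ 5*β-1)
        (by linarith : (0:ℝ) ≤ -(5*β^3-3*β^2+3*β-1))]
    nlinarith [hsq, ha]
  rcases le_or_gt β (1/2) with hc2 | hc2
  · nlinarith
  · have hb : 1 - 2*β - 3*β^2 < 0 := by nlinarith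
    have hcube : 0 ≤ 5*β^3-3*β^2+3*β-1 := by nlinarith [sq_nonneg (β - 1/2)]
    have hsq : (2*s*(1-2*β))^2 ≤ (1-2*β-3*β^2)^2 := by
      nlinarith [mul_nonneg (by linarith : (0:ℝ) ≤ 5*β-1) hcube]
    have ha : 2*s*(1-2*β) ≤ 0 := by nlinarith
    nlinarith [hsq, ha, hb]

lemma Fderiv_at (β : ℝ) (h0 : 0 < β) (h1 : β < 1) :
    HasDerivAt (fun β : ℝ => 2 * Real.sqrt (β * (1 - β)) - 4 * β
        + 2 * β * Real.log (4 * β / (1 - β)))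
      ((1 - 2*β) / Real.sqrt (β * (1 - β)) - 4 + 2/(1-β)
        + 2 * Real.log (4 * β / (1 - β))) β := by
  have hb1 : (0:ℝ) < 1 - β := by linarith
  have hprod : 0 < β * (1 - β) := mul_pos h0 hb1
  have hs : 0 < Real.sqrt (β * (1 - β)) := Real.sqrt_pos.2 hprod
  have hx : 0 < 4 * β / (1 - β) := by positivity
  have d1 : HasDerivAt (fun β : ℝ => β * (1 - β)) (1 - 2*β) β := by
    have := (hasDerivAt_id β).mul ((hasDerivAt_const β (1:ℝ)).sub (hasDerivAt_id β))
    refine this.congr_deriv ?_; simp [id_eq]; ring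
  have d2 : HasDerivAt (fun β : ℝ => Real.sqrt (β * (1 - β)))
      ((1 - 2*β) / (2 * Real.sqrt (β * (1-β)))) β := d1.sqrt (ne_of_gt hprod)
  have d3 : HasDerivAt (fun β : ℝ => 4 * β / (1 - β)) (4 / (1-β)^2) β := by
    have := (((hasDerivAt_id β).const_mul 4).div
      ((hasDerivAt_const β (1:ℝ)).sub (hasDerivAt_id β)) (ne_of_gt hb1))
    refine this.congr_deriv ?_; simp only [id_eq, Pi.sub_apply]; field_simp; ring
  have d4 : HasDerivAt (fun β : ℝ => Real.log (4 * β / (1 - β)))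
      ((4 / (1-β)^2) / (4 * β / (1 - β))) β := d3.log (ne_of_gt hx)
  have d5 : HasDerivAt (fun β : ℝ => 2 * β * Real.log (4 * β / (1 - β)))
      (2 * Real.log (4 * β / (1 - β)) + 2/(1-β)) β := by
    have := ((hasDerivAt_id β).const_mul 2).mul d4
    refine this.congr_deriv ?_
    simp only [id_eq]
    field_simp
  have := ((d2.const_mul 2).sub ((hasDerivAt_id β).const_mul 4)).add d5
  refine this.congr_deriv ?_
  have hsne := ne_of_gt hs
  field_simp
  ring

lemma Fderiv_pos (β : ℝ) (h0 : 1/5 < β) (h1 : β < 1) :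
    0 < (1 - 2*β) / Real.sqrt (β * (1 - β)) - 4 + 2/(1-β)
        + 2 * Real.log (4 * β / (1 - β)) := by
  have hb0 : (0:ℝ) < β := by linarith
  have hb1 : (0:ℝ) < 1 - β := by linarith
  set s := Real.sqrt (β * (1 - β)) with hsdef
  have hprod : 0 < β * (1 - β) := mul_pos hb0 hb1
  have hs : 0 < s := Real.sqrt_pos.2 hprod
  have hs2 : s * s = β * (1 - β) := Real.mul_self_sqrt hprod.le
  have hx1 : 1 < 4 * β / (1 - β) := by
    rw [lt_div_iff₀ hb1]; linarith
  have hlog : 1 - (1-β)/(4*β) < Real.log (4 * β / (1 - β)) := by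
    have h := Real.log_lt_sub_one_of_pos (x := (4 * β / (1 - β))⁻¹)
      (by positivity) (by
        intro h
        rw [inv_eq_one] at h
        linarith)
    rw [Real.log_inv] at h
    have hinv : (4 * β / (1 - β))⁻¹ = (1-β)/(4*β) := by
      rw [inv_div]
    rw [hinv] at h
    linarith
  have keyineq := Fpoly_key β s h0 h1 hs2 hs
  have e1 : (1-2*β)/s = s*(1-2*β)/(β*(1-β)) := by
    rw [← hs2]; field_simp
  have hE : (1 - 2*β) / s - 2 + 2/(1-β) - (1-β)/(2*β)
      = (2*s*(1-2*β) - (1 - 2*β - 3*β^2)) / (2*(β*(1-β))) := by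
    rw [e1]; field_simp; ring
  have hE0 : 0 ≤ (1 - 2*β) / s - 2 + 2/(1-β) - (1-β)/(2*β) := by
    rw [hE]
    apply div_nonneg (by linarith) (by positivity)
  have hhalf : (1-β)/(2*β) = 2*((1-β)/(4*β)) := by ring
  linarith

/-- With `F(β) = 2√(β(1-β)) - 4β + 2β log(4β/(1-β))` on `(0,1)`, one has
`F(1/5) = 0`, `F` is strictly increasing on `(1/5, 1)`, and `F(β) > 0` for all
`β ∈ (1/5, 1)`. -/
theorem F_pos_on_interval
    (F : ℝ → ℝ)
    (hF : ∀ β : ℝ, F β = 2 * Real.sqrt (β * (1 - β)) - 4 * β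
        + 2 * β * Real.log (4 * β / (1 - β))) :
    F (1 / 5) = 0
    ∧ StrictMonoOn F (Set.Ioo (1 / 5 : ℝ) 1)
    ∧ ∀ β ∈ Set.Ioo (1 / 5 : ℝ) 1, 0 < F β := by
  have hFe : F = fun β : ℝ => 2 * Real.sqrt (β * (1 - β)) - 4 * β
        + 2 * β * Real.log (4 * β / (1 - β)) := funext hF
  have hF0 : F (1/5) = 0 := by
    rw [hF]
    have h1 : (1/5:ℝ) * (1 - 1/5) = (2/5)^2 := by norm_num
    have h2 : (4:ℝ) * (1/5) / (1 - 1/5) = 1 := by norm_num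
    rw [h1, Real.sqrt_sq (by norm_num), h2, Real.log_one]
    norm_num
  have smIco : StrictMonoOn F (Set.Ico (1/5 : ℝ) 1) := by
    rw [hFe]
    apply strictMonoOn_of_deriv_pos (convex_Ico _ _)
    · intro x hx
      exact ((Fderiv_at x (by linarith [hx.1] : (0:ℝ) < x) hx.2).continuousAt).continuousWithinAt
    · rw [interior_Ico]
      intro x hx
      rw [(Fderiv_at x (by linarith [hx.1] : (0:ℝ) < x) hx.2).deriv]
      exact Fderiv_pos x hx.1 hx.2
  refine ⟨hF0, smIco.mono (Set.Ioo_subset_Ico_self), fun β hβ => ?_⟩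
  have := smIco ⟨le_refl _, by norm_num⟩ ⟨hβ.1.le, hβ.2⟩ hβ.1
  rw [hF0] at this
  exact this
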